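/- Let T be a compact metric space, X a Hilbert space, ω₁,...,ω_M Lipschitz self-maps of T with Lipschitz constants r_i, and R₁,...,R_M ∈ L(X). Then for every f ∈ C(T,X) and μ ∈ cabv(X), ∫ f d(H(μ)) = ∫ g dμ, where H(μ) = ∑_{i=1}^M R_i ∘ ω_i(μ) and g = ∑_{i=1}^M R_i* ∘ f ∘ ω_i. -/

import Mathlib

open MeasureTheory Filter Topology Set

noncomputable section

/-- A finite Borel partition of the whole space. -/
def IsBorelPartition {T : Type*} [MeasurableSpace T] (P : Finset (Set T)) : Prop :=
  (∀ A ∈ P, MeasurableSet A) ∧ ((P : Set (Set T)).PairwiseDisjoint id) ∧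
    ⋃₀ (P : Set (Set T)) = Set.univ

/-- Total variation of a vector measure, as an extended real. -/
def evar {T X : Type*} [MeasurableSpace T] [NormedAddCommGroup X]
    (μ : VectorMeasure T X) : ENNReal :=
  ⨆ (P : Finset (Set T)) (_ : IsBorelPartition P), ∑ A ∈ P, (‖μ A‖₊ : ENNReal)

/-- Bounded variation. -/
def BddVar {T X : Type*} [MeasurableSpace T] [NormedAddCommGroup X]
    (μ : VectorMeasure T X) : Prop := evar μ ≠ ⊤

/-- The variational norm. -/
def varNorm {T X : Type*} [MeasurableSpace T] [NormedAddCommGroup X]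
    (μ : VectorMeasure T X) : ℝ := (evar μ).toReal

/-- Composition of a bounded operator with a vector measure. -/
def opComp {T X Y 𝕜 : Type*} [MeasurableSpace T] [NontriviallyNormedField 𝕜]
    [NormedAddCommGroup X] [NormedSpace 𝕜 X] [NormedAddCommGroup Y] [NormedSpace 𝕜 Y]
    (R : X →L[𝕜] Y) (μ : VectorMeasure T X) : VectorMeasure T Y :=
  μ.mapRange R.toLinearMap.toAddMonoidHom R.continuous

/-- The Markov-type operator generated by operators `R i` and maps `ω i`. -/
def markovH {T X 𝕜 : Type*} [MeasurableSpace T] [NontriviallyNormedField 𝕜]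
    [NormedAddCommGroup X] [NormedSpace 𝕜 X] {M : ℕ}
    (R : Fin M → X →L[𝕜] X) (ω : Fin M → T → T) (μ : VectorMeasure T X) :
    VectorMeasure T X :=
  ∑ i, opComp (R i) (μ.map (ω i))

/-- Simple (finitely-valued, measurable) function. -/
def IsSimpleFn {T X : Type*} [MeasurableSpace T] (g : T → X) : Prop :=
  (Set.range g).Finite ∧ ∀ x : X, MeasurableSet (g ⁻¹' {x})

/-- Integral of a simple function against a vector measure. -/
def simpleIntegral (𝕜 : Type*) {T X : Type*} [RCLike 𝕜] [MeasurableSpace T]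
    [NormedAddCommGroup X] [InnerProductSpace 𝕜 X] (μ : VectorMeasure T X) (g : T → X) : 𝕜 :=
  ∑ᶠ x : X, (inner 𝕜 x (μ (g ⁻¹' {x})) : 𝕜)

/-- `I` is the (uniform, sesquilinear) integral of `f` with respect to `μ`. -/
def HasUIntegral (𝕜 : Type*) {T X : Type*} [RCLike 𝕜] [MeasurableSpace T]
    [NormedAddCommGroup X] [InnerProductSpace 𝕜 X] (μ : VectorMeasure T X)
    (f : T → X) (I : 𝕜) : Prop :=
  ∀ g : ℕ → T → X, (∀ n, IsSimpleFn (g n)) → TendstoUniformly g f atTop →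
    Tendsto (fun n => simpleIntegral 𝕜 μ (g n)) atTop (nhds I)

/-- The uniform integral (defaulting to `0` when it does not exist). -/
def uIntegral (𝕜 : Type*) {T X : Type*} [RCLike 𝕜] [MeasurableSpace T]
    [NormedAddCommGroup X] [InnerProductSpace 𝕜 X] (μ : VectorMeasure T X) (f : T → X) : 𝕜 :=
  letI := Classical.propDecidable
  if h : ∃ I, HasUIntegral 𝕜 μ f I then h.choose else 0

/-- The Monge–Kantorovich norm. -/
def mkNorm (𝕜 : Type*) {T X : Type*} [RCLike 𝕜] [PseudoMetricSpace T] [MeasurableSpace T]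
    [NormedAddCommGroup X] [InnerProductSpace 𝕜 X] (μ : VectorMeasure T X) : ℝ :=
  sSup {s | ∃ (f : T → X) (L : NNReal), LipschitzWith L f ∧ (∀ t, ‖f t‖ + (L : ℝ) ≤ 1) ∧
    s = ‖uIntegral 𝕜 μ f‖}

/-- The modified Monge–Kantorovich norm. -/
def mkNormStar (𝕜 : Type*) {T X : Type*} [RCLike 𝕜] [PseudoMetricSpace T] [MeasurableSpace T]
    [NormedAddCommGroup X] [InnerProductSpace 𝕜 X] (μ : VectorMeasure T X) : ℝ :=
  sSup {s | ∃ f : T → X, LipschitzWith 1 f ∧ s = ‖uIntegral 𝕜 μ f‖}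

/-- The `X`-valued Dirac measure `B ↦ δ_t(B) • x`. -/
def diracVM {T : Type*} [MeasurableSpace T] {𝕜 X : Type*} [RCLike 𝕜]
    [NormedAddCommGroup X] [NormedSpace 𝕜 X] (t : T) (x : X) : VectorMeasure T X :=
  ((Measure.dirac t).toSignedMeasure).mapRange
    { toFun := fun c : ℝ => (c : 𝕜) • x
      map_zero' := by simp
      map_add' := fun a b => by push_cast; rw [add_smul] }
    (RCLike.continuous_ofReal.smul continuous_const)

end



section Aux

variable {T : Type*} [MeasurableSpace T] {𝕜 X : Type*} [RCLike 𝕜]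
  [NormedAddCommGroup X] [InnerProductSpace 𝕜 X]

/-! ### Simple function lemmas -/

theorem IsSimpleFn.comp' {β γ : Type*} {p : T → β} (hp : IsSimpleFn p) (φ : β → γ) :
    IsSimpleFn (fun t => φ (p t)) := by
  classical
  constructor
  · have : Set.range (fun t => φ (p t)) = φ '' Set.range p := by
      rw [← Set.range_comp]; rfl
    rw [this]; exact hp.1.image φ
  · intro y
    have : (fun t => φ (p t)) ⁻¹' {y} =
        ⋃ b ∈ hp.1.toFinset.filter (fun b => φ b = y), p ⁻¹' {b} := by
      ext t
      simp only [Set.mem_preimage, Set.mem_singleton_iff, Set.mem_iUnion,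
        Finset.mem_filter, Set.Finite.mem_toFinset, exists_prop]
      constructor
      · intro h; exact ⟨p t, ⟨Set.mem_range_self t, h⟩, rfl⟩
      · rintro ⟨b, ⟨_, hb⟩, rfl⟩; exact hb
    rw [this]
    exact (hp.1.toFinset.filter _).measurableSet_biUnion (fun b _ => hp.2 b)

theorem isSimpleFn_pair {g h : T → X} (hg : IsSimpleFn g) (hh : IsSimpleFn h) :
    IsSimpleFn (fun t => (g t, h t)) := by
  constructor
  · exact (hg.1.prod hh.1).subset (fun x ⟨t, ht⟩ => ht ▸ ⟨Set.mem_range_self t, Set.mem_range_self t⟩)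
  · intro ⟨a, b⟩
    have : (fun t => (g t, h t)) ⁻¹' {(a, b)} = g ⁻¹' {a} ∩ h ⁻¹' {b} := by
      ext t; simp [Prod.ext_iff]
    rw [this]; exact (hg.2 a).inter (hh.2 b)

theorem isSimpleFn_pack {M : ℕ} {g : T → X} (hg : IsSimpleFn g) {ω : Fin M → T → T}
    (hω : ∀ i, Measurable (ω i)) : IsSimpleFn (fun t => fun i : Fin M => g (ω i t)) := by
  constructor
  · refine (Set.Finite.pi (fun _ : Fin M => hg.1)).subset ?_
    rintro v ⟨t, rfl⟩
    exact Set.mem_univ_pi.mpr fun i => Set.mem_range_self _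
  · intro v
    have : (fun t => fun i : Fin M => g (ω i t)) ⁻¹' {v} =
        ⋂ i : Fin M, (ω i) ⁻¹' (g ⁻¹' {v i}) := by
      ext t; simp [funext_iff]
    rw [this]
    exact MeasurableSet.iInter fun i => hω i (hg.2 (v i))

/-! ### Finite additivity of vector measures -/

theorem vm_sum_of_disjoint {ι : Type*} (ν : VectorMeasure T X) (s : Finset ι) (A : ι → Set T)
    (hm : ∀ i ∈ s, MeasurableSet (A i)) (hd : (s : Set ι).PairwiseDisjoint A) :
    ν (⋃ i ∈ s, A i) = ∑ i ∈ s, ν (A i) := by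
  classical
  induction s using Finset.induction with
  | empty => simp
  | @insert a s ha ih =>
    rw [Finset.sum_insert ha, Finset.set_biUnion_insert,
      VectorMeasure.of_union ?_ (hm a (Finset.mem_insert_self a s)) ?_,
      ih (fun i hi => hm i (Finset.mem_insert_of_mem hi))
        (hd.subset (by simp [Set.subset_insert]))]
    · simp only [Set.disjoint_iUnion_right]
      intro i hi
      exact hd (Finset.mem_coe.2 (Finset.mem_insert_self a s))
        (Finset.mem_coe.2 (Finset.mem_insert_of_mem hi)) (fun h => ha (h ▸ hi))
    · exact MeasurableSet.biUnion s.countable_toSet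
        (fun i hi => hm i (Finset.mem_insert_of_mem hi))

/-! ### Variation bounds -/

theorem sum_nnnorm_le_evar {ι : Type*} (μ : VectorMeasure T X) (s : Finset ι) (A : ι → Set T)
    (hm : ∀ i ∈ s, MeasurableSet (A i)) (hd : (s : Set ι).PairwiseDisjoint A) :
    ∑ i ∈ s, (‖μ (A i)‖₊ : ENNReal) ≤ evar μ := by
  classical
  set U : Set T := ⋃ i ∈ s, A i with hU
  set P : Finset (Set T) := (s.filter (fun i => A i ≠ ∅)).image A ∪ {Uᶜ} with hP
  have hmemP : ∀ B ∈ P, (∃ i ∈ s, A i ≠ ∅ ∧ A i = B) ∨ B = Uᶜ := by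
    intro B hB
    rcases Finset.mem_union.1 hB with h | h
    · obtain ⟨i, hi, rfl⟩ := Finset.mem_image.1 h
      rcases Finset.mem_filter.1 hi with ⟨hi1, hi2⟩
      exact Or.inl ⟨i, hi1, hi2, rfl⟩
    · exact Or.inr (Finset.mem_singleton.1 h)
  have hUm : MeasurableSet U := MeasurableSet.biUnion s.countable_toSet hm
  have hpart : IsBorelPartition P := by
    refine ⟨?_, ?_, ?_⟩
    · intro B hB
      rcases hmemP B hB with ⟨i, hi, _, rfl⟩ | rfl
      · exact hm i hi
      · exact hUm.compl
    · intro B hB B' hB' hne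
      rcases hmemP B hB with ⟨i, hi, _, rfl⟩ | rfl <;>
        rcases hmemP B' hB' with ⟨j, hj, _, rfl⟩ | rfl
      · exact hd hi hj (fun h => hne (congrArg A h))
      · show Disjoint (A i) Uᶜ
        exact disjoint_compl_right.mono_left (Set.subset_biUnion_of_mem (u := A) hi)
      · show Disjoint Uᶜ (A j)
        exact (disjoint_compl_right.mono_left (Set.subset_biUnion_of_mem (u := A) hj)).symm
      · exact absurd rfl hne
    · apply Set.eq_univ_of_forall
      intro x
      by_cases hx : x ∈ U
      · obtain ⟨i, hi, hxi⟩ := Set.mem_iUnion₂.1 hx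
        refine Set.mem_sUnion.2 ⟨A i, ?_, hxi⟩
        refine Finset.mem_coe.2 (Finset.mem_union_left _ (Finset.mem_image_of_mem A ?_))
        exact Finset.mem_filter.2 ⟨hi, Set.nonempty_iff_ne_empty.1 ⟨x, hxi⟩⟩
      · exact Set.mem_sUnion.2 ⟨Uᶜ, Finset.mem_coe.2 (Finset.mem_union_right _ (Finset.mem_singleton_self _)), hx⟩
  have step1 : ∑ i ∈ s, (‖μ (A i)‖₊ : ENNReal)
      = ∑ i ∈ s.filter (fun i => A i ≠ ∅), (‖μ (A i)‖₊ : ENNReal) := by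
    refine (Finset.sum_filter_of_ne ?_).symm
    intro i _ hne h0
    apply hne
    rw [h0, VectorMeasure.empty]
    simp
  have step2 : ∑ i ∈ s.filter (fun i => A i ≠ ∅), (‖μ (A i)‖₊ : ENNReal)
      = ∑ B ∈ (s.filter (fun i => A i ≠ ∅)).image A, (‖μ B‖₊ : ENNReal) := by
    rw [Finset.sum_image]
    intro i hi j hj hij
    by_contra hne
    have := hd (Finset.mem_coe.2 (Finset.mem_filter.1 hi).1)
      (Finset.mem_coe.2 (Finset.mem_filter.1 hj).1) hne
    have h0 : A i = ∅ := by
      have := Set.disjoint_iff_inter_eq_empty.1 this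
      simpa [hij, Set.inter_self] using this
    exact (Finset.mem_filter.1 hi).2 h0
  calc ∑ i ∈ s, (‖μ (A i)‖₊ : ENNReal)
      = ∑ B ∈ (s.filter (fun i => A i ≠ ∅)).image A, (‖μ B‖₊ : ENNReal) := by
        rw [step1, step2]
    _ ≤ ∑ B ∈ P, (‖μ B‖₊ : ENNReal) :=
        Finset.sum_le_sum_of_subset Finset.subset_union_left
    _ ≤ evar μ := le_iSup₂ (f := fun (P : Finset (Set T)) (_ : IsBorelPartition P) =>
        ∑ A ∈ P, (‖μ A‖₊ : ENNReal)) P hpart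

theorem varNorm_nonneg (μ : VectorMeasure T X) : 0 ≤ varNorm μ := ENNReal.toReal_nonneg

theorem sum_norm_le_varNorm {ι : Type*} {μ : VectorMeasure T X} (hμ : BddVar μ)
    (s : Finset ι) (A : ι → Set T)
    (hm : ∀ i ∈ s, MeasurableSet (A i)) (hd : (s : Set ι).PairwiseDisjoint A) :
    ∑ i ∈ s, ‖μ (A i)‖ ≤ varNorm μ := by
  have h := sum_nnnorm_le_evar μ s A hm hd
  have h2 := ENNReal.toReal_mono hμ h
  rw [ENNReal.toReal_sum (fun i _ => ENNReal.coe_ne_top)] at h2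
  simpa [varNorm] using h2

/-! ### Simple integral lemmas -/

theorem simpleIntegral_eq_sum (μ : VectorMeasure T X) {g : T → X} {F : Finset X}
    (hF : Set.range g ⊆ ↑F) :
    simpleIntegral 𝕜 μ g = ∑ x ∈ F, (inner 𝕜 x (μ (g ⁻¹' {x})) : 𝕜) := by
  apply finsum_eq_finset_sum_of_support_subset
  intro x hx
  by_contra hxF
  have hxr : x ∉ Set.range g := fun h => hxF (hF h)
  have : g ⁻¹' {x} = ∅ := Set.preimage_singleton_eq_empty.mpr hxr
  rw [Function.mem_support] at hx
  apply hx
  rw [this, VectorMeasure.empty, inner_zero_right]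

theorem simpleIntegral_comp {β : Type*} (μ : VectorMeasure T X) {p : T → β}
    (hp : IsSimpleFn p) (φ : β → X) {B : Finset β} (hB : Set.range p ⊆ ↑B) :
    simpleIntegral 𝕜 μ (fun t => φ (p t)) = ∑ b ∈ B, (inner 𝕜 (φ b) (μ (p ⁻¹' {b})) : 𝕜) := by
  classical
  have h1 : simpleIntegral 𝕜 μ (fun t => φ (p t))
      = ∑ x ∈ B.image φ, (inner 𝕜 x (μ ((fun t => φ (p t)) ⁻¹' {x})) : 𝕜) := by
    refine simpleIntegral_eq_sum μ ?_
    rintro _ ⟨t, rfl⟩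
    exact Finset.mem_coe.2 (Finset.mem_image_of_mem φ (Finset.mem_coe.1 (hB (Set.mem_range_self t))))
  have h2 : ∀ x : X, (fun t => φ (p t)) ⁻¹' {x}
      = ⋃ b ∈ B.filter (fun b => φ b = x), p ⁻¹' {b} := by
    intro x
    ext t
    simp only [Set.mem_preimage, Set.mem_singleton_iff, Set.mem_iUnion, Finset.mem_filter,
      exists_prop]
    constructor
    · intro h
      exact ⟨p t, ⟨Finset.mem_coe.1 (hB (Set.mem_range_self t)), h⟩, rfl⟩
    · rintro ⟨b, ⟨_, hb⟩, rfl⟩; exact hb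
  rw [h1]
  have h3 : ∀ x ∈ B.image φ, (inner 𝕜 x (μ ((fun t => φ (p t)) ⁻¹' {x})) : 𝕜)
      = ∑ b ∈ B.filter (fun b => φ b = x), (inner 𝕜 (φ b) (μ (p ⁻¹' {b})) : 𝕜) := by
    intro x _
    rw [h2 x, vm_sum_of_disjoint μ _ _ (fun b _ => hp.2 b) ?_, inner_sum]
    · refine Finset.sum_congr rfl fun b hb => ?_
      rw [(Finset.mem_filter.1 hb).2]
    · intro b hb b' hb' hne
      exact (Set.disjoint_singleton.2 hne).preimage p
  rw [Finset.sum_congr rfl h3]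
  exact Finset.sum_fiberwise_of_maps_to (fun b hb => Finset.mem_image_of_mem φ hb) _

theorem norm_simpleIntegral_sub_le {μ : VectorMeasure T X} (hμ : BddVar μ)
    {g h : T → X} (hg : IsSimpleFn g) (hh : IsSimpleFn h) {ε : ℝ} (hε : 0 ≤ ε)
    (hb : ∀ t, ‖g t - h t‖ ≤ ε) :
    ‖simpleIntegral 𝕜 μ g - simpleIntegral 𝕜 μ h‖ ≤ ε * varNorm μ := by
  classical
  set p : T → X × X := fun t => (g t, h t) with hpdef
  have hp : IsSimpleFn p := isSimpleFn_pair hg hh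
  set B : Finset (X × X) := hp.1.toFinset with hBdef
  have hB : Set.range p ⊆ ↑B := by rw [hBdef, Set.Finite.coe_toFinset]
  have hg' : simpleIntegral 𝕜 μ g = ∑ b ∈ B, (inner 𝕜 b.1 (μ (p ⁻¹' {b})) : 𝕜) :=
    simpleIntegral_comp μ hp (fun b => b.1) hB
  have hh' : simpleIntegral 𝕜 μ h = ∑ b ∈ B, (inner 𝕜 b.2 (μ (p ⁻¹' {b})) : 𝕜) :=
    simpleIntegral_comp μ hp (fun b => b.2) hB
  rw [hg', hh', ← Finset.sum_sub_distrib]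
  have hterm : ∀ b : X × X, (inner 𝕜 b.1 (μ (p ⁻¹' {b})) : 𝕜) - inner 𝕜 b.2 (μ (p ⁻¹' {b}))
      = inner 𝕜 (b.1 - b.2) (μ (p ⁻¹' {b})) := fun b => (inner_sub_left _ _ _).symm
  simp_rw [hterm]
  set B' : Finset (X × X) := B.filter (fun b => p ⁻¹' {b} ≠ ∅) with hB'def
  calc ‖∑ b ∈ B, (inner 𝕜 (b.1 - b.2) (μ (p ⁻¹' {b})) : 𝕜)‖
      ≤ ∑ b ∈ B, ‖(inner 𝕜 (b.1 - b.2) (μ (p ⁻¹' {b})) : 𝕜)‖ := norm_sum_le _ _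
    _ = ∑ b ∈ B', ‖(inner 𝕜 (b.1 - b.2) (μ (p ⁻¹' {b})) : 𝕜)‖ := by
        refine (Finset.sum_filter_of_ne ?_).symm
        intro b _ hne h0
        apply hne
        rw [h0, VectorMeasure.empty, inner_zero_right, norm_zero]
    _ ≤ ∑ b ∈ B', ε * ‖μ (p ⁻¹' {b})‖ := by
        refine Finset.sum_le_sum fun b hbmem => ?_
        obtain ⟨t, ht⟩ := Set.nonempty_iff_ne_empty.2 (Finset.mem_filter.1 hbmem).2
        have ht' : p t = b := ht
        have hbb : ‖b.1 - b.2‖ ≤ ε := by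
          rw [← ht']; exact hb t
        exact le_trans (norm_inner_le_norm _ _)
          (mul_le_mul_of_nonneg_right hbb (norm_nonneg _))
    _ = ε * ∑ b ∈ B', ‖μ (p ⁻¹' {b})‖ := (Finset.mul_sum _ _ _).symm
    _ ≤ ε * varNorm μ := by
        refine mul_le_mul_of_nonneg_left ?_ hε
        refine sum_norm_le_varNorm hμ B' (fun b => p ⁻¹' {b}) (fun b _ => hp.2 b) ?_
        intro b hb1 b' hb1' hne
        exact (Set.disjoint_singleton.2 hne).preimage p

/-! ### Variation of the Markov operator -/

theorem evar_zero : evar (0 : VectorMeasure T X) = 0 := by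
  refine le_antisymm (iSup₂_le fun P _ => ?_) zero_le
  simp

theorem evar_add_le (ν₁ ν₂ : VectorMeasure T X) : evar (ν₁ + ν₂) ≤ evar ν₁ + evar ν₂ := by
  refine iSup₂_le fun P hP => ?_
  calc ∑ A ∈ P, (‖(ν₁ + ν₂) A‖₊ : ENNReal)
      ≤ ∑ A ∈ P, ((‖ν₁ A‖₊ : ENNReal) + (‖ν₂ A‖₊ : ENNReal)) := by
        refine Finset.sum_le_sum fun A _ => ?_
        rw [VectorMeasure.add_apply]
        exact_mod_cast nnnorm_add_le _ _
    _ = (∑ A ∈ P, (‖ν₁ A‖₊ : ENNReal)) + ∑ A ∈ P, (‖ν₂ A‖₊ : ENNReal) := Finset.sum_add_distrib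
    _ ≤ evar ν₁ + evar ν₂ := add_le_add
        (le_iSup₂ (f := fun (P : Finset (Set T)) (_ : IsBorelPartition P) =>
          ∑ A ∈ P, (‖ν₁ A‖₊ : ENNReal)) P hP)
        (le_iSup₂ (f := fun (P : Finset (Set T)) (_ : IsBorelPartition P) =>
          ∑ A ∈ P, (‖ν₂ A‖₊ : ENNReal)) P hP)

theorem evar_sum_le {ι : Type*} (s : Finset ι) (ν : ι → VectorMeasure T X) :
    evar (∑ i ∈ s, ν i) ≤ ∑ i ∈ s, evar (ν i) := by
  classical
  induction s using Finset.induction with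
  | empty => simp [evar_zero]
  | @insert a s ha ih =>
    rw [Finset.sum_insert ha, Finset.sum_insert ha]
    exact le_trans (evar_add_le _ _) (add_le_add le_rfl ih)

theorem evar_opComp_le (R : X →L[𝕜] X) (ν : VectorMeasure T X) :
    evar (opComp (𝕜 := 𝕜) R ν) ≤ (‖R‖₊ : ENNReal) * evar ν := by
  refine iSup₂_le fun P hP => ?_
  calc ∑ A ∈ P, (‖(opComp (𝕜 := 𝕜) R ν) A‖₊ : ENNReal)
      ≤ ∑ A ∈ P, (‖R‖₊ : ENNReal) * (‖ν A‖₊ : ENNReal) := by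
        refine Finset.sum_le_sum fun A _ => ?_
        have : (opComp (𝕜 := 𝕜) R ν) A = R (ν A) := rfl
        rw [this, ← ENNReal.coe_mul]
        exact_mod_cast R.le_opNNNorm (ν A)
    _ = (‖R‖₊ : ENNReal) * ∑ A ∈ P, (‖ν A‖₊ : ENNReal) := (Finset.mul_sum _ _ _).symm
    _ ≤ (‖R‖₊ : ENNReal) * evar ν := mul_le_mul_right
        (le_iSup₂ (f := fun (P : Finset (Set T)) (_ : IsBorelPartition P) =>
          ∑ A ∈ P, (‖ν A‖₊ : ENNReal)) P hP) _

theorem evar_map_le (ν : VectorMeasure T X) {ω : T → T} (hω : Measurable ω) :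
    evar (ν.map ω) ≤ evar ν := by
  refine iSup₂_le fun P hP => ?_
  have h1 : ∀ A ∈ P, (ν.map ω) A = ν (ω ⁻¹' A) := fun A hA =>
    VectorMeasure.map_apply ν hω (hP.1 A hA)
  calc ∑ A ∈ P, (‖(ν.map ω) A‖₊ : ENNReal)
      = ∑ A ∈ P, (‖ν (ω ⁻¹' A)‖₊ : ENNReal) :=
        Finset.sum_congr rfl (fun A hA => by rw [h1 A hA])
    _ ≤ evar ν := by
        refine sum_nnnorm_le_evar ν P (fun A => ω ⁻¹' A) (fun A hA => hω (hP.1 A hA)) ?_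
        intro A hA B hB hne
        exact (hP.2.1 hA hB hne).preimage ω

theorem bddVar_markovH {M : ℕ} (R : Fin M → X →L[𝕜] X) (ω : Fin M → T → T)
    (hω : ∀ i, Measurable (ω i)) {μ : VectorMeasure T X} (hμ : BddVar μ) :
    BddVar (markovH R ω μ) := by
  have h1 : evar (markovH R ω μ) ≤ ∑ i, evar (opComp (𝕜 := 𝕜) (R i) (μ.map (ω i))) :=
    evar_sum_le _ _
  have h2 : ∀ i, evar (opComp (𝕜 := 𝕜) (R i) (μ.map (ω i))) ≤ (‖R i‖₊ : ENNReal) * evar μ :=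
    fun i => le_trans (evar_opComp_le _ _) (mul_le_mul_right (evar_map_le μ (hω i)) _)
  have h3 : evar (markovH R ω μ) ≤ ∑ i, (‖R i‖₊ : ENNReal) * evar μ :=
    le_trans h1 (Finset.sum_le_sum fun i _ => h2 i)
  refine ne_top_of_le_ne_top ?_ h3
  refine (ENNReal.sum_lt_top.2 fun i _ => ?_).ne
  exact ENNReal.mul_lt_top ENNReal.coe_lt_top (lt_top_iff_ne_top.2 hμ)

/-! ### Convergence lemmas -/

theorem exists_tendsto_simpleIntegral {μ : VectorMeasure T X} (hμ : BddVar μ)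
    {f : T → X} {g : ℕ → T → X} (hgs : ∀ n, IsSimpleFn (g n))
    (hgu : TendstoUniformly g f atTop) :
    ∃ I : 𝕜, Tendsto (fun n => simpleIntegral 𝕜 μ (g n)) atTop (nhds I) := by
  apply cauchySeq_tendsto_of_complete
  rw [Metric.cauchySeq_iff]
  intro ε hε
  set V := varNorm μ with hV
  have hV0 : 0 ≤ V := varNorm_nonneg μ
  set δ := ε / (4 * (V + 1)) with hδdef
  have hδ : 0 < δ := div_pos hε (by positivity)
  obtain ⟨N, hN⟩ := (Metric.tendstoUniformly_iff.1 hgu δ hδ).exists_forall_of_atTop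
  refine ⟨N, fun m hm n hn => ?_⟩
  have hb : ∀ t, ‖g m t - g n t‖ ≤ 2 * δ := by
    intro t
    calc ‖g m t - g n t‖ ≤ ‖g m t - f t‖ + ‖f t - g n t‖ := norm_sub_le_norm_sub_add_norm_sub _ _ _
      _ ≤ δ + δ := add_le_add
          (by rw [← dist_eq_norm, dist_comm]; exact (hN m hm t).le)
          (by rw [← dist_eq_norm]; exact (hN n hn t).le)
      _ = 2 * δ := by ring
  have := norm_simpleIntegral_sub_le (𝕜 := 𝕜) hμ (hgs m) (hgs n) (by positivity) hb
  rw [dist_eq_norm]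
  refine lt_of_le_of_lt this ?_
  have hne : V + 1 ≠ 0 := by positivity
  have : 2 * δ * V < 2 * δ * (V + 1) := by
    have := mul_lt_mul_of_pos_left (lt_add_one V) (by positivity : (0:ℝ) < 2 * δ)
    linarith
  have heq : 2 * δ * (V + 1) = ε / 2 := by
    rw [hδdef]; field_simp; ring
  linarith

theorem hasUIntegral_of_tendsto {μ : VectorMeasure T X} (hμ : BddVar μ)
    {f : T → X} {g : ℕ → T → X} (hgs : ∀ n, IsSimpleFn (g n))
    (hgu : TendstoUniformly g f atTop) {I : 𝕜}
    (hI : Tendsto (fun n => simpleIntegral 𝕜 μ (g n)) atTop (nhds I)) :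
    HasUIntegral 𝕜 μ f I := by
  intro h hhs hhu
  rw [Metric.tendsto_atTop] at hI ⊢
  intro ε hε
  set V := varNorm μ with hV
  have hV0 : 0 ≤ V := varNorm_nonneg μ
  set δ := ε / (8 * (V + 1)) with hδdef
  have hδ : 0 < δ := div_pos hε (by positivity)
  obtain ⟨N₁, hN₁⟩ := (Metric.tendstoUniformly_iff.1 hgu δ hδ).exists_forall_of_atTop
  obtain ⟨N₂, hN₂⟩ := (Metric.tendstoUniformly_iff.1 hhu δ hδ).exists_forall_of_atTop
  obtain ⟨N₃, hN₃⟩ := hI (ε / 2) (half_pos hε)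
  refine ⟨max N₁ (max N₂ N₃), fun n hn => ?_⟩
  have hn₁ : N₁ ≤ n := le_trans (le_max_left _ _) hn
  have hn₂ : N₂ ≤ n := le_trans (le_max_left _ _) (le_trans (le_max_right _ _) hn)
  have hn₃ : N₃ ≤ n := le_trans (le_max_right _ _) (le_trans (le_max_right _ _) hn)
  have hb : ∀ t, ‖h n t - g n t‖ ≤ 2 * δ := by
    intro t
    calc ‖h n t - g n t‖ ≤ ‖h n t - f t‖ + ‖f t - g n t‖ := norm_sub_le_norm_sub_add_norm_sub _ _ _
      _ ≤ δ + δ := add_le_add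
          (by rw [← dist_eq_norm, dist_comm]; exact (hN₂ n hn₂ t).le)
          (by rw [← dist_eq_norm]; exact (hN₁ n hn₁ t).le)
      _ = 2 * δ := by ring
  have hkey := norm_simpleIntegral_sub_le (𝕜 := 𝕜) hμ (hhs n) (hgs n) (by positivity) hb
  have htri : dist (simpleIntegral 𝕜 μ (h n)) I
      ≤ ‖simpleIntegral 𝕜 μ (h n) - simpleIntegral 𝕜 μ (g n)‖
        + dist (simpleIntegral 𝕜 μ (g n)) I := by
    rw [← dist_eq_norm]
    exact dist_triangle _ _ _
  have h2δ : 2 * δ * V ≤ ε / 2 := by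
    have h1 : 2 * δ * V ≤ 2 * δ * (V + 1) := by nlinarith
    have heq : 2 * δ * (V + 1) = ε / 4 := by
      rw [hδdef]; field_simp; ring
    linarith
  have := hN₃ n hn₃
  calc dist (simpleIntegral 𝕜 μ (h n)) I
      ≤ ‖simpleIntegral 𝕜 μ (h n) - simpleIntegral 𝕜 μ (g n)‖
        + dist (simpleIntegral 𝕜 μ (g n)) I := htri
    _ < ε / 2 + ε / 2 := by
        refine add_lt_add_of_le_of_lt (le_trans hkey h2δ) this
    _ = ε := by ring

/-! ### Change of variable for simple functions -/

theorem simpleIntegral_markovH {M : ℕ} [CompleteSpace X] (R : Fin M → X →L[𝕜] X)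
    (ω : Fin M → T → T) (hω : ∀ i, Measurable (ω i)) (μ : VectorMeasure T X)
    {g : T → X} (hg : IsSimpleFn g) :
    simpleIntegral 𝕜 (markovH R ω μ) g
      = simpleIntegral 𝕜 μ (fun t => ∑ i, ContinuousLinearMap.adjoint (R i) (g (ω i t))) := by
  classical
  set F : Finset X := hg.1.toFinset with hFdef
  have hF : Set.range g ⊆ ↑F := by rw [hFdef, Set.Finite.coe_toFinset]
  set p : T → (Fin M → X) := fun t => fun i => g (ω i t) with hpdef
  have hp : IsSimpleFn p := isSimpleFn_pack hg hω
  set B : Finset (Fin M → X) := hp.1.toFinset with hBdef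
  have hB : Set.range p ⊆ ↑B := by rw [hBdef, Set.Finite.coe_toFinset]
  -- each summand equals the pulled-back simple integral
  have key : ∀ i : Fin M, simpleIntegral 𝕜 (opComp (𝕜 := 𝕜) (R i) (μ.map (ω i))) g
      = ∑ v ∈ B, (inner 𝕜 (ContinuousLinearMap.adjoint (R i) (v i)) (μ (p ⁻¹' {v})) : 𝕜) := by
    intro i
    have e1 : simpleIntegral 𝕜 (opComp (𝕜 := 𝕜) (R i) (μ.map (ω i))) g
        = ∑ x ∈ F, (inner 𝕜 x ((opComp (𝕜 := 𝕜) (R i) (μ.map (ω i))) (g ⁻¹' {x})) : 𝕜) :=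
      simpleIntegral_eq_sum _ hF
    have e2 : ∀ x ∈ F, (inner 𝕜 x ((opComp (𝕜 := 𝕜) (R i) (μ.map (ω i))) (g ⁻¹' {x})) : 𝕜)
        = inner 𝕜 (ContinuousLinearMap.adjoint (R i) x) (μ ((fun t => g (ω i t)) ⁻¹' {x})) := by
      intro x _
      have h1 : (opComp (𝕜 := 𝕜) (R i) (μ.map (ω i))) (g ⁻¹' {x})
          = (R i) ((μ.map (ω i)) (g ⁻¹' {x})) := rfl
      have h2 : (μ.map (ω i)) (g ⁻¹' {x}) = μ ((ω i) ⁻¹' (g ⁻¹' {x})) :=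
        VectorMeasure.map_apply μ (hω i) (hg.2 x)
      rw [h1, h2, ← ContinuousLinearMap.adjoint_inner_left]
      rfl
    have e3 : simpleIntegral 𝕜 μ (fun t => ContinuousLinearMap.adjoint (R i) (g (ω i t)))
        = ∑ x ∈ F, (inner 𝕜 (ContinuousLinearMap.adjoint (R i) x)
            (μ ((fun t => g (ω i t)) ⁻¹' {x})) : 𝕜) := by
      have hgw : IsSimpleFn (fun t => g (ω i t)) := by
        constructor
        · exact hg.1.subset (fun x ⟨t, ht⟩ => ⟨ω i t, ht⟩)
        · intro x
          exact hω i (hg.2 x)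
      have hrange : Set.range (fun t => g (ω i t)) ⊆ ↑F :=
        fun x ⟨t, ht⟩ => hF ⟨ω i t, ht⟩
      exact simpleIntegral_comp μ hgw (ContinuousLinearMap.adjoint (R i)) hrange
    have e4 : simpleIntegral 𝕜 μ (fun t => ContinuousLinearMap.adjoint (R i) (g (ω i t)))
        = ∑ v ∈ B, (inner 𝕜 (ContinuousLinearMap.adjoint (R i) (v i)) (μ (p ⁻¹' {v})) : 𝕜) :=
      simpleIntegral_comp μ hp (fun v => ContinuousLinearMap.adjoint (R i) (v i)) hB
    rw [e1, Finset.sum_congr rfl e2, ← e3, e4]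
  -- the sum function
  have main : simpleIntegral 𝕜 μ (fun t => ∑ i, ContinuousLinearMap.adjoint (R i) (g (ω i t)))
      = ∑ v ∈ B, (inner 𝕜 (∑ i, ContinuousLinearMap.adjoint (R i) (v i)) (μ (p ⁻¹' {v})) : 𝕜) :=
    simpleIntegral_comp μ hp (fun v => ∑ i, ContinuousLinearMap.adjoint (R i) (v i)) hB
  have hmk : simpleIntegral 𝕜 (markovH R ω μ) g
      = ∑ i, simpleIntegral 𝕜 (opComp (𝕜 := 𝕜) (R i) (μ.map (ω i))) g := by
    rw [markovH]
    -- sum of measures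
    have hsum : ∀ (s : Finset (Fin M)),
        simpleIntegral 𝕜 (∑ i ∈ s, opComp (𝕜 := 𝕜) (R i) (μ.map (ω i))) g
          = ∑ i ∈ s, simpleIntegral 𝕜 (opComp (𝕜 := 𝕜) (R i) (μ.map (ω i))) g := by
      intro s
      induction s using Finset.induction with
      | empty =>
        simp only [Finset.sum_empty]
        rw [show (simpleIntegral 𝕜 (0 : VectorMeasure T X) g) = 0 from ?_]
        · apply finsum_eq_zero_of_forall_eq_zero
          intro x
          simp [VectorMeasure.zero_apply]
      | @insert a s ha ih =>
        rw [Finset.sum_insert ha, Finset.sum_insert ha, ← ih]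
        rw [simpleIntegral_eq_sum _ hF, simpleIntegral_eq_sum _ hF, simpleIntegral_eq_sum _ hF,
          ← Finset.sum_add_distrib]
        refine Finset.sum_congr rfl fun x _ => ?_
        rw [VectorMeasure.add_apply, inner_add_right]
    exact hsum Finset.univ
  rw [hmk, main]
  rw [Finset.sum_congr rfl (fun i _ => key i), Finset.sum_comm]
  refine Finset.sum_congr rfl fun v _ => ?_
  rw [sum_inner]

/-! ### Simple approximation of continuous functions -/

theorem isSimpleFn_const (c : X) : IsSimpleFn (fun _ : T => c) := by
  constructor
  · exact (Set.finite_singleton c).subset (fun x ⟨t, ht⟩ => ht ▸ rfl)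
  · intro x
    by_cases h : c = x
    · have : (fun _ : T => c) ⁻¹' {x} = Set.univ := by ext t; simp [h]
      rw [this]; exact MeasurableSet.univ
    · have : (fun _ : T => c) ⁻¹' {x} = ∅ := by ext t; simp [h]
      rw [this]; exact MeasurableSet.empty

theorem IsSimpleFn.piecewise {s : Set T} (hs : MeasurableSet s) {g h : T → X}
    (hg : IsSimpleFn g) (hh : IsSimpleFn h) [∀ t, Decidable (t ∈ s)] :
    IsSimpleFn (s.piecewise g h) := by
  constructor
  · refine (hg.1.union hh.1).subset ?_
    rw [Set.range_piecewise]
    exact Set.union_subset_union (Set.image_subset_range _ _) (Set.image_subset_range _ _)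
  · intro x
    rw [Set.piecewise_preimage]
    exact ((hg.2 x).inter hs).union ((hh.2 x).diff hs)

section Approx

variable [PseudoMetricSpace T] [OpensMeasurableSpace T]

theorem exists_simple_on_list (f : T → X) (δ : ℝ) (l : List T) :
    ∃ g : T → X, IsSimpleFn g ∧
      ∀ t ∈ ⋃ c ∈ l, Metric.ball c δ, ∃ c ∈ l, dist t c < δ ∧ g t = f c := by
  classical
  induction l with
  | nil => exact ⟨fun _ => 0, isSimpleFn_const 0, fun t ht => by simp at ht⟩
  | cons c cs ih =>
    obtain ⟨g, hgs, hgp⟩ := ih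
    refine ⟨(Metric.ball c δ).piecewise (fun _ => f c) g,
      (isSimpleFn_const (f c)).piecewise measurableSet_ball hgs, ?_⟩
    intro t ht
    by_cases htc : t ∈ Metric.ball c δ
    · exact ⟨c, List.mem_cons_self, Metric.mem_ball.1 htc,
        Set.piecewise_eq_of_mem _ _ _ htc⟩
    · have ht' : t ∈ ⋃ c' ∈ cs, Metric.ball c' δ := by
        simp only [Set.mem_iUnion, exists_prop] at ht ⊢
        rcases ht with ⟨c', hc', htc'⟩
        rcases List.mem_cons.1 hc' with rfl | hc'
        · exact absurd htc' htc
        · exact ⟨c', hc', htc'⟩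
      obtain ⟨c', hc', hd, hg⟩ := hgp t ht'
      exact ⟨c', List.mem_cons_of_mem c hc', hd,
        (Set.piecewise_eq_of_notMem _ _ _ htc).trans hg⟩

end Approx

section ApproxCompact

variable [MetricSpace T] [CompactSpace T] [BorelSpace T]

theorem exists_simple_approx {f : T → X} (hf : Continuous f) {ε : ℝ} (hε : 0 < ε) :
    ∃ g : T → X, IsSimpleFn g ∧ ∀ t, dist (f t) (g t) < ε := by
  obtain ⟨δ, hδ, hδ'⟩ := Metric.uniformContinuous_iff.1
    (CompactSpace.uniformContinuous_of_continuous hf) ε hε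
  obtain ⟨s, hs⟩ := isCompact_univ.elim_finite_subcover
    (fun t : T => Metric.ball t δ) (fun t => Metric.isOpen_ball)
    (fun x _ => Set.mem_iUnion.2 ⟨x, Metric.mem_ball_self hδ⟩)
  obtain ⟨g, hgs, hgp⟩ := exists_simple_on_list (T := T) (X := X) f δ s.toList
  refine ⟨g, hgs, fun t => ?_⟩
  have ht : t ∈ ⋃ c ∈ s.toList, Metric.ball c δ := by
    have := hs (Set.mem_univ t)
    simp only [Set.mem_iUnion, exists_prop] at this ⊢
    obtain ⟨c, hc, htc⟩ := this
    exact ⟨c, Finset.mem_toList.2 hc, htc⟩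
  obtain ⟨c, _, hd, hg⟩ := hgp t ht
  rw [hg]
  exact hδ' hd

theorem exists_simple_seq {f : T → X} (hf : Continuous f) :
    ∃ g : ℕ → T → X, (∀ n, IsSimpleFn (g n)) ∧ TendstoUniformly g f atTop := by
  have h : ∀ n : ℕ, ∃ g : T → X, IsSimpleFn g ∧ ∀ t, dist (f t) (g t) < ((n : ℝ) + 1)⁻¹ :=
    fun n => exists_simple_approx hf (by positivity)
  choose g hgs hgp using h
  refine ⟨g, hgs, Metric.tendstoUniformly_iff.2 fun ε hε => ?_⟩
  obtain ⟨N, hN⟩ := exists_nat_one_div_lt hε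
  rw [eventually_atTop]
  refine ⟨N, fun n hn t => ?_⟩
  refine lt_trans (hgp n t) (lt_of_le_of_lt ?_ (by rwa [one_div] at hN))
  rw [inv_le_inv₀ (by positivity) (by positivity)]
  exact_mod_cast Nat.succ_le_succ hn

end ApproxCompact

end Aux

/-- change of variable for the Markov-type operator:
`∫ f d(H(μ)) = ∫ g dμ` with `H(μ) = ∑ R_i ∘ ω_i(μ)` and `g = ∑ R_i* ∘ f ∘ ω_i`. -/
theorem change_of_variable_markovH
    {T : Type*} [MetricSpace T] [CompactSpace T] [MeasurableSpace T] [BorelSpace T]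
    {𝕜 X : Type*} [RCLike 𝕜] [NormedAddCommGroup X] [InnerProductSpace 𝕜 X] [CompleteSpace X]
    {M : ℕ} (ω : Fin M → T → T) (r : Fin M → NNReal)
    (hω : ∀ i, LipschitzWith (r i) (ω i)) (R : Fin M → X →L[𝕜] X)
    (μ : VectorMeasure T X) (hμ : BddVar μ) (f : T → X) (hf : Continuous f) :
    ∃ I : 𝕜, HasUIntegral 𝕜 (markovH R ω μ) f I ∧
      HasUIntegral 𝕜 μ (fun t => ∑ i, ContinuousLinearMap.adjoint (R i) (f (ω i t))) I := by
  classical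
  have hωm : ∀ i, Measurable (ω i) := fun i => (hω i).continuous.measurable
  have hν : BddVar (markovH R ω μ) := bddVar_markovH R ω hωm hμ
  obtain ⟨g, hgs, hgu⟩ := exists_simple_seq hf
  obtain ⟨I, hI⟩ := exists_tendsto_simpleIntegral (𝕜 := 𝕜) hν hgs hgu
  refine ⟨I, hasUIntegral_of_tendsto hν hgs hgu hI, ?_⟩
  set F : T → X := fun t => ∑ i, ContinuousLinearMap.adjoint (R i) (f (ω i t)) with hFdef
  set G : ℕ → T → X := fun n t => ∑ i, ContinuousLinearMap.adjoint (R i) (g n (ω i t)) with hGdef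
  have hGs : ∀ n, IsSimpleFn (G n) := by
    intro n
    exact (isSimpleFn_pack (hgs n) hωm).comp'
      (fun v => ∑ i, ContinuousLinearMap.adjoint (R i) (v i))
  have hint : ∀ n, simpleIntegral 𝕜 μ (G n) = simpleIntegral 𝕜 (markovH R ω μ) (g n) :=
    fun n => (simpleIntegral_markovH R ω hωm μ (hgs n)).symm
  have hGu : TendstoUniformly G F atTop := by
    rw [Metric.tendstoUniformly_iff]
    intro ε hε
    set C : ℝ := ∑ i, ‖ContinuousLinearMap.adjoint (R i)‖ with hCdef
    have hC0 : 0 ≤ C := Finset.sum_nonneg fun i _ => norm_nonneg _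
    set δ := ε / (C + 1) with hδdef
    have hδ : 0 < δ := div_pos hε (by positivity)
    filter_upwards [Metric.tendstoUniformly_iff.1 hgu δ hδ] with n hn t
    have hbound : dist (F t) (G n t) ≤ C * δ := by
      rw [dist_eq_norm, hFdef, hGdef]
      simp only
      rw [← Finset.sum_sub_distrib]
      refine le_trans (norm_sum_le _ _) ?_
      rw [hCdef, Finset.sum_mul]
      refine Finset.sum_le_sum fun i _ => ?_
      rw [← map_sub]
      refine le_trans ((ContinuousLinearMap.adjoint (R i)).le_opNorm _) ?_
      refine mul_le_mul_of_nonneg_left ?_ (norm_nonneg _)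
      rw [← dist_eq_norm]
      exact (hn (ω i t)).le
    refine lt_of_le_of_lt hbound ?_
    calc C * δ < (C + 1) * δ := by nlinarith
      _ = ε := by rw [hδdef]; field_simp
  refine hasUIntegral_of_tendsto hμ hGs hGu ?_
  have : (fun n => simpleIntegral 𝕜 μ (G n))
      = fun n => simpleIntegral 𝕜 (markovH R ω μ) (g n) := funext hint
  rw [this]
  exact hI
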